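/- Let $I=[0,\infty)$, let $v,w:I\to\mathbb{R}$ be differentiable with $v\le w$, set $\Gamma=\{(x,y):x\in I, v(x)\le y\le w(x)\}$, and let $\alpha:\Gamma\to\mathbb{R}$ be continuous with continuous partial derivative $\alpha_y$ on $\Gamma$. If $w'(x)-\alpha(x,w(x))\le 0\le v'(x)-\alpha(x,v(x))$ for all $x\in I$, then there exists a differentiable function $\phi:I\to\mathbb{R}$ with $v\le\phi\le w$ and $\phi'(x)=\alpha(x,\phi(x))$ for all $x\in I$. -/

import Mathlib

open Set Filter Topology

/-- Barrier lemma: if `f - g` has nonnegative derivative wherever `g < f` (in the interior),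
and `f b ≤ g b`, then `f ≤ g` on all of `[a, b]`. -/
lemma stay_below_aux {f g : ℝ → ℝ} {a b : ℝ} (hab : a ≤ b)
    (hf : ContinuousOn f (Icc a b)) (hg : ContinuousOn g (Icc a b))
    (hderiv : ∀ t ∈ Ioo a b, g t < f t →
      ∃ d, 0 ≤ d ∧ HasDerivAt (fun s => f s - g s) d t)
    (hb : f b ≤ g b) : ∀ t ∈ Icc a b, f t ≤ g t := by
  by_contra hcon
  push_neg at hcon
  obtain ⟨t₀, ht₀, hgt⟩ := hcon
  have ht₀b : t₀ < b := by
    rcases lt_or_eq_of_le ht₀.2 with h | h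
    · exact h
    · exact absurd hb (by rw [← h]; exact not_le.2 hgt)
  set S : Set ℝ := Icc t₀ b ∩ (fun t => f t - g t) ⁻¹' Iic 0 with hS
  have hScl : IsClosed S := by
    refine ContinuousOn.preimage_isClosed_of_isClosed
      ((hf.sub hg).mono (Icc_subset_Icc ht₀.1 le_rfl)) isClosed_Icc isClosed_Iic
  have hSne : S.Nonempty := ⟨b, ⟨le_of_lt ht₀b, le_rfl⟩, by simpa using sub_nonpos.2 hb⟩
  have hSbdd : BddBelow S := (bddBelow_Icc : BddBelow (Icc t₀ b)).mono inter_subset_left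
  set s₁ := sInf S with hs₁def
  have hs₁S : s₁ ∈ S := hScl.csInf_mem hSne hSbdd
  have hs₁Icc : s₁ ∈ Icc t₀ b := hs₁S.1
  have hfs₁ : f s₁ - g s₁ ≤ 0 := hs₁S.2
  have ht₀s₁ : t₀ < s₁ := by
    rcases lt_or_eq_of_le hs₁Icc.1 with h | h
    · exact h
    · exfalso; rw [← h] at hfs₁; linarith [sub_pos.2 hgt]
  have hbetween : ∀ t ∈ Ico t₀ s₁, g t < f t := by
    intro t ht
    by_contra hc
    push_neg at hc
    have htS : t ∈ S := ⟨⟨ht.1, le_trans (le_of_lt ht.2) hs₁Icc.2⟩, by simpa using sub_nonpos.2 hc⟩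
    exact absurd (csInf_le hSbdd htS) (not_le.2 ht.2)
  have hmono : MonotoneOn (fun s => f s - g s) (Icc t₀ s₁) := by
    apply monotoneOn_of_deriv_nonneg (convex_Icc _ _)
    · exact (hf.sub hg).mono (Icc_subset_Icc ht₀.1 hs₁Icc.2)
    · intro t ht
      rw [interior_Icc] at ht
      have htab : t ∈ Ioo a b := ⟨lt_of_le_of_lt ht₀.1 ht.1, lt_of_lt_of_le ht.2 hs₁Icc.2⟩
      obtain ⟨d, _, hd⟩ := hderiv t htab (hbetween t ⟨le_of_lt ht.1, ht.2⟩)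
      exact hd.differentiableAt.differentiableWithinAt
    · intro t ht
      rw [interior_Icc] at ht
      have htab : t ∈ Ioo a b := ⟨lt_of_le_of_lt ht₀.1 ht.1, lt_of_lt_of_le ht.2 hs₁Icc.2⟩
      obtain ⟨d, hd0, hd⟩ := hderiv t htab (hbetween t ⟨le_of_lt ht.1, ht.2⟩)
      rw [hd.deriv]; exact hd0
  have h1 : f t₀ - g t₀ ≤ f s₁ - g s₁ :=
    hmono ⟨le_rfl, le_of_lt ht₀s₁⟩ ⟨le_of_lt ht₀s₁, le_rfl⟩ (le_of_lt ht₀s₁)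
  linarith [sub_pos.2 hgt]

/-- No-crossing of solutions of an ODE with a Lipschitz right-hand side, backward version:
if `f b ≤ g b` at the right endpoint, then `f ≤ g` on `[0, b]`. -/
lemma no_cross_aux {F : ℝ → ℝ → ℝ} {K : NNReal} {b : ℝ} (hb : 0 ≤ b)
    (hK : ∀ t ∈ Icc (0:ℝ) b, LipschitzWith K (F t))
    {f g : ℝ → ℝ}
    (hf : ∀ t ∈ Icc (0:ℝ) b, HasDerivWithinAt f (F t (f t)) (Icc (0:ℝ) b) t)
    (hg : ∀ t ∈ Icc (0:ℝ) b, HasDerivWithinAt g (F t (g t)) (Icc (0:ℝ) b) t)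
    (hend : f b ≤ g b) : ∀ t ∈ Icc (0:ℝ) b, f t ≤ g t := by
  have hfc : ContinuousOn f (Icc 0 b) := fun t ht => (hf t ht).continuousWithinAt
  have hgc : ContinuousOn g (Icc 0 b) := fun t ht => (hg t ht).continuousWithinAt
  by_contra hcon
  push_neg at hcon
  obtain ⟨t₀, ht₀, hgt⟩ := hcon
  have ht₀b : t₀ < b := by
    rcases lt_or_eq_of_le ht₀.2 with h | h
    · exact h
    · exact absurd hend (by rw [← h]; exact not_le.2 hgt)
  set S : Set ℝ := Icc t₀ b ∩ (fun t => f t - g t) ⁻¹' Iic 0 with hS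
  have hScl : IsClosed S :=
    ContinuousOn.preimage_isClosed_of_isClosed
      ((hfc.sub hgc).mono (Icc_subset_Icc ht₀.1 le_rfl)) isClosed_Icc isClosed_Iic
  have hSne : S.Nonempty := ⟨b, ⟨le_of_lt ht₀b, le_rfl⟩, by simpa using sub_nonpos.2 hend⟩
  have hSbdd : BddBelow S := (bddBelow_Icc : BddBelow (Icc t₀ b)).mono inter_subset_left
  set s₁ := sInf S with hs₁def
  have hs₁S : s₁ ∈ S := hScl.csInf_mem hSne hSbdd
  have hs₁Icc : s₁ ∈ Icc t₀ b := hs₁S.1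
  have hfs₁ : f s₁ - g s₁ ≤ 0 := hs₁S.2
  have ht₀s₁ : t₀ < s₁ := by
    rcases lt_or_eq_of_le hs₁Icc.1 with h | h
    · exact h
    · exfalso; rw [← h] at hfs₁; linarith [sub_pos.2 hgt]
  have hbetween : ∀ t ∈ Ico t₀ s₁, g t ≤ f t := by
    intro t ht
    by_contra hc
    push_neg at hc
    have htS : t ∈ S := ⟨⟨ht.1, le_trans (le_of_lt ht.2) hs₁Icc.2⟩,
      by simpa using sub_nonpos.2 (le_of_lt hc)⟩
    exact absurd (csInf_le hSbdd htS) (not_le.2 ht.2)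
  -- f s₁ = g s₁ by continuity from the left
  have hmemIcc : s₁ ∈ Icc (0:ℝ) b := ⟨le_trans ht₀.1 hs₁Icc.1, hs₁Icc.2⟩
  have heq : f s₁ = g s₁ := by
    refine le_antisymm (by linarith) ?_
    have hcl : s₁ ∈ closure (Ico t₀ s₁) := by
      rw [closure_Ico (ne_of_lt ht₀s₁)]; exact ⟨le_of_lt ht₀s₁, le_rfl⟩
    have hne : (𝓝[Ico t₀ s₁] s₁).NeBot := mem_closure_iff_nhdsWithin_neBot.1 hcl
    have hten : Tendsto (fun t => f t - g t) (𝓝[Ico t₀ s₁] s₁) (𝓝 (f s₁ - g s₁)) := by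
      apply ((hfc.sub hgc) s₁ hmemIcc).mono
      intro t ht
      exact ⟨le_trans ht₀.1 ht.1, le_trans (le_of_lt ht.2) hs₁Icc.2⟩
    have : 0 ≤ f s₁ - g s₁ :=
      ge_of_tendsto hten (eventually_nhdsWithin_of_forall
        (fun t ht => sub_nonneg.2 (hbetween t ht)))
    linarith
  -- uniqueness backward in time on [t₀, s₁]
  set Sset : ℝ → Set ℝ := fun t => if t ∈ Icc (0:ℝ) b then (univ : Set ℝ) else ∅ with hSset
  have hlip : ∀ t, LipschitzOnWith K (F t) (Sset t) := by
    intro t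
    by_cases ht : t ∈ Icc (0:ℝ) b
    · simp only [hSset, if_pos ht]
      exact lipschitzOnWith_univ.2 (hK t ht)
    · simp only [hSset, if_neg ht]
      exact lipschitzOnWith_empty _ _
  have hsub : Icc t₀ s₁ ⊆ Icc (0:ℝ) b :=
    Icc_subset_Icc ht₀.1 hs₁Icc.2
  have hmemnhds : ∀ t ∈ Ioc t₀ s₁, Icc (0:ℝ) b ∈ 𝓝[Iic t] t := by
    intro t ht
    rw [mem_nhdsWithin]
    refine ⟨Ioi 0, isOpen_Ioi, lt_of_le_of_lt ht₀.1 ht.1, ?_⟩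
    rintro y ⟨hy1, hy2⟩
    exact ⟨le_of_lt hy1, le_trans (le_trans hy2 ht.2) hs₁Icc.2⟩
  have hmemS : ∀ t ∈ Ioc t₀ s₁, ∀ z : ℝ, z ∈ Sset t := by
    intro t ht z
    have h1 : t ∈ Icc (0:ℝ) b := hsub ⟨le_of_lt ht.1, ht.2⟩
    have h2 : Sset t = univ := if_pos h1
    rw [h2]; trivial
  have huniq : EqOn f g (Icc t₀ s₁) := by
    apply ODE_solution_unique_of_mem_Icc_left (fun t _ => hlip t)
      (hfc.mono hsub) ?_ (fun t ht => hmemS t ht _)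
      (hgc.mono hsub) ?_ (fun t ht => hmemS t ht _) heq
    · intro t ht
      exact (hf t (hsub ⟨le_of_lt ht.1, ht.2⟩)).mono_of_mem_nhdsWithin (hmemnhds t ht)
    · intro t ht
      exact (hg t (hsub ⟨le_of_lt ht.1, ht.2⟩)).mono_of_mem_nhdsWithin (hmemnhds t ht)
  have := huniq ⟨le_rfl, le_of_lt ht₀s₁⟩
  linarith [sub_pos.2 hgt]
/-- Existence of a global solution to `y' = α(x,y)` on `[0,∞)` trapped between a lower
solution `v` and an upper solution `w`. -/
theorem ode_existence_between_lower_upper_solutions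
    (v w v' w' : ℝ → ℝ)
    (hv : ∀ x ∈ Ici (0 : ℝ), HasDerivWithinAt v (v' x) (Ici 0) x)
    (hw : ∀ x ∈ Ici (0 : ℝ), HasDerivWithinAt w (w' x) (Ici 0) x)
    (hvw : ∀ x ∈ Ici (0 : ℝ), v x ≤ w x)
    (Γ : Set (ℝ × ℝ))
    (hΓ : Γ = {p : ℝ × ℝ | p.1 ∈ Ici (0 : ℝ) ∧ v p.1 ≤ p.2 ∧ p.2 ≤ w p.1})
    (α αy : ℝ × ℝ → ℝ)
    (hαcont : ContinuousOn α Γ)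
    (hαy : ∀ p ∈ Γ, HasDerivWithinAt (fun y => α (p.1, y)) (αy p)
      (Icc (v p.1) (w p.1)) p.2)
    (hαycont : ContinuousOn αy Γ)
    (hupper : ∀ x ∈ Ici (0 : ℝ), w' x - α (x, w x) ≤ 0)
    (hlower : ∀ x ∈ Ici (0 : ℝ), 0 ≤ v' x - α (x, v x)) :
    ∃ φ : ℝ → ℝ, (∀ x ∈ Ici (0 : ℝ), v x ≤ φ x ∧ φ x ≤ w x) ∧
      ∀ x ∈ Ici (0 : ℝ), HasDerivWithinAt φ (α (x, φ x)) (Ici 0) x := by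
  classical
  have hvc : ContinuousOn v (Ici 0) := fun x hx => (hv x hx).continuousWithinAt
  have hwc : ContinuousOn w (Ici 0) := fun x hx => (hw x hx).continuousWithinAt
  set m : ℝ → ℝ := fun x => max x 0 with hm
  have hmc : Continuous m := continuous_id.max continuous_const
  have hm0 : ∀ x, m x ∈ Ici (0:ℝ) := fun x => show (0:ℝ) ≤ max x 0 from le_max_right _ _
  have hvm : Continuous fun x : ℝ => v (m x) := hvc.comp_continuous hmc hm0
  have hwm : Continuous fun x : ℝ => w (m x) := hwc.comp_continuous hmc hm0
  set q : ℝ × ℝ → ℝ × ℝ := fun p => (m p.1, max (v (m p.1)) (min p.2 (w (m p.1)))) with hq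
  have hqc : Continuous q := by
    refine (hmc.comp continuous_fst).prodMk ?_
    exact (hvm.comp continuous_fst).max (continuous_snd.min (hwm.comp continuous_fst))
  have hqΓ : ∀ p, q p ∈ Γ := by
    intro p; rw [hΓ]
    exact ⟨hm0 _, le_max_left _ _, max_le (hvw _ (hm0 _)) (min_le_right _ _)⟩
  have hqid : ∀ p ∈ Γ, q p = p := by
    intro p hp; rw [hΓ] at hp
    obtain ⟨h1, h2, h3⟩ := hp
    have hm1 : m p.1 = p.1 := max_eq_left h1
    simp only [hq, hm1]
    rw [min_eq_left h3, max_eq_right h2]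
  set β : ℝ × ℝ → ℝ := fun p => α (q p) with hβ
  have hβc : Continuous β := hαcont.comp_continuous hqc hqΓ
  have hβeq : ∀ p ∈ Γ, β p = α p := fun p hp => by
    simp only [hβ]; rw [hqid p hp]
  set βy : ℝ × ℝ → ℝ := fun p => αy (q p) with hβy
  have hβyc : Continuous βy := hαycont.comp_continuous hqc hqΓ
  have hββ : ∀ p, β (q p) = β p := by
    intro p; simp only [hβ]; rw [hqid (q p) (hqΓ p)]
  -- per-strip bounds and Lipschitz constants
  have key : ∀ b : ℝ, 0 ≤ b → ∃ C L : ℝ, 0 ≤ C ∧ 0 ≤ L ∧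
      (∀ p : ℝ × ℝ, p.1 ≤ b → |β p| ≤ C) ∧
      (∀ x : ℝ, x ≤ b → LipschitzWith (Real.toNNReal L) fun y => β (x, y)) := by
    intro b hb
    obtain ⟨Mv, hMv⟩ := (isCompact_Icc (a := (0:ℝ)) (b := b)).exists_bound_of_continuousOn
      (hvc.mono Icc_subset_Ici_self)
    obtain ⟨Mw, hMw⟩ := (isCompact_Icc (a := (0:ℝ)) (b := b)).exists_bound_of_continuousOn
      (hwc.mono Icc_subset_Ici_self)
    set M : ℝ := max Mv Mw with hMdef
    have hvM : ∀ x ∈ Icc (0:ℝ) b, -M ≤ v x ∧ v x ≤ M := by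
      intro x hx
      have := hMv x hx
      rw [Real.norm_eq_abs] at this
      constructor
      · linarith [neg_le_of_abs_le this, neg_le_neg (le_max_left Mv Mw)]
      · exact le_trans (le_of_abs_le this) (le_max_left _ _)
    have hwM : ∀ x ∈ Icc (0:ℝ) b, -M ≤ w x ∧ w x ≤ M := by
      intro x hx
      have := hMw x hx
      rw [Real.norm_eq_abs] at this
      constructor
      · linarith [neg_le_of_abs_le this, neg_le_neg (le_max_right Mv Mw)]
      · exact le_trans (le_of_abs_le this) (le_max_right _ _)
    have hKcomp : IsCompact (Icc (0:ℝ) b ×ˢ Icc (-M) M) := isCompact_Icc.prod isCompact_Icc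
    obtain ⟨C, hC⟩ := hKcomp.exists_bound_of_continuousOn hβc.continuousOn
    obtain ⟨L, hL⟩ := hKcomp.exists_bound_of_continuousOn hβyc.continuousOn
    have hqK : ∀ p : ℝ × ℝ, p.1 ≤ b → q p ∈ Icc (0:ℝ) b ×ˢ Icc (-M) M := by
      intro p hp
      have h1 : m p.1 ∈ Icc (0:ℝ) b := ⟨le_max_right _ _, max_le hp hb⟩
      refine ⟨h1, ?_, ?_⟩
      · exact le_trans (hvM _ h1).1 (le_max_left _ _)
      · exact max_le (hvM _ h1).2 (le_trans (min_le_right _ _) (hwM _ h1).2)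
    refine ⟨max C 0, max L 0, le_max_right _ _, le_max_right _ _, ?_, ?_⟩
    · intro p hp
      have h1 := hC (q p) (hqK p hp)
      rw [Real.norm_eq_abs, hββ p] at h1
      exact le_trans h1 (le_max_left _ _)
    · intro x hx
      have hxb : m x ∈ Icc (0:ℝ) b := ⟨le_max_right _ _, max_le hx hb⟩
      set c : ℝ → ℝ := fun y => max (v (m x)) (min y (w (m x))) with hc
      have hlipc : LipschitzWith 1 c := (LipschitzWith.id.min_const _).const_max _
      have hmaps : MapsTo c univ (Icc (v (m x)) (w (m x))) := fun y _ =>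
        ⟨le_max_left _ _, max_le (hvw _ (hm0 x)) (min_le_right _ _)⟩
      have hαlip : LipschitzOnWith (Real.toNNReal (max L 0)) (fun y => α (m x, y))
          (Icc (v (m x)) (w (m x))) := by
        apply (convex_Icc _ _).lipschitzOnWith_of_nnnorm_hasDerivWithin_le
          (f' := fun z => αy (m x, z))
        · intro z hz
          exact hαy (m x, z) (by rw [hΓ]; exact ⟨hm0 x, hz.1, hz.2⟩)
        · intro z hz
          have hmem : (m x, z) ∈ Icc (0:ℝ) b ×ˢ Icc (-M) M :=
            ⟨hxb, le_trans (hvM _ hxb).1 hz.1, le_trans hz.2 (hwM _ hxb).2⟩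
          have h1 := hL (m x, z) hmem
          have h2 : βy (m x, z) = αy (m x, z) := by
            simp only [hβy]
            rw [hqid (m x, z) (by rw [hΓ]; exact ⟨hm0 x, hz.1, hz.2⟩)]
          rw [h2] at h1
          have h3 : ‖αy (m x, z)‖ ≤ max L 0 := le_trans h1 (le_max_left _ _)
          simpa [← NNReal.coe_le_coe, Real.coe_toNNReal _ (le_max_right L 0), coe_nnnorm]
            using h3
      have hcomp := hαlip.comp (lipschitzOnWith_univ.2 hlipc) (mapsTo_univ_iff.2 fun y => hmaps trivial)
      rw [mul_one] at hcomp
      have := lipschitzOnWith_univ.1 hcomp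
      convert this using 1
      rfl
  -- solutions on [0, n] with value w n at the right endpoint
  have hψex : ∀ n : ℕ, ∃ f : ℝ → ℝ, f n = w n ∧
      ∀ t ∈ Icc (0:ℝ) n, HasDerivWithinAt f (β (t, f t)) (Icc (0:ℝ) n) t := by
    intro n
    obtain ⟨C, L, hC0, hL0, hCb, hLip⟩ := key n (Nat.cast_nonneg n)
    have hpl : IsPicardLindelof (fun t y => β (t, y)) (tmin := 0) (tmax := n)
        ⟨n, ⟨Nat.cast_nonneg n, le_refl _⟩⟩ (w n)
        (Real.toNNReal (C * n + 1)) 0 (Real.toNNReal C) (Real.toNNReal L) := by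
      refine ⟨?_, ?_, ?_, ?_⟩
      · exact fun t ht => ((hLip t ht.2).lipschitzOnWith)
      · intro y _
        exact (hβc.comp (continuous_id.prodMk continuous_const)).continuousOn
      · intro t ht y _
        rw [Real.norm_eq_abs, Real.coe_toNNReal _ hC0]
        exact hCb (t, y) ht.2
      · rw [Real.coe_toNNReal _ hC0,
          Real.coe_toNNReal _ (add_nonneg (mul_nonneg hC0 (Nat.cast_nonneg n)) zero_le_one)]
        show C * max ((n:ℝ) - n) ((n:ℝ) - 0) ≤ C * n + 1 - 0
        rw [sub_self]
        have : max (0:ℝ) ((n:ℝ) - 0) = (n:ℝ) := by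
          rw [sub_zero]; exact max_eq_right (Nat.cast_nonneg n)
        rw [this]
        linarith
    obtain ⟨f, hf0, hfd⟩ := hpl.exists_eq_forall_mem_Icc_hasDerivWithinAt₀
    exact ⟨f, hf0, hfd⟩
  choose ψ hψ0 hψd using hψex
  have hψc : ∀ n : ℕ, ContinuousOn (ψ n) (Icc (0:ℝ) n) :=
    fun n t ht => (hψd n t ht).continuousWithinAt
  -- trapping
  have htrap : ∀ n : ℕ, ∀ t ∈ Icc (0:ℝ) n, v t ≤ ψ n t ∧ ψ n t ≤ w t := by
    intro n
    have hupperT : ∀ t ∈ Icc (0:ℝ) n, ψ n t ≤ w t := by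
      apply stay_below_aux (Nat.cast_nonneg n) (hψc n)
        (hwc.mono Icc_subset_Ici_self)
      · intro t ht hlt
        have ht' : t ∈ Icc (0:ℝ) n := ⟨le_of_lt ht.1, le_of_lt ht.2⟩
        have hdf : HasDerivAt (ψ n) (β (t, ψ n t)) t :=
          (hψd n t ht').hasDerivAt (Icc_mem_nhds ht.1 ht.2)
        have hdw : HasDerivAt w (w' t) t :=
          (hw t (le_of_lt ht.1)).hasDerivAt (Ici_mem_nhds ht.1)
        refine ⟨β (t, ψ n t) - w' t, ?_, hdf.sub hdw⟩
        have hqval : q (t, ψ n t) = (t, w t) := by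
          simp only [hq, hm]
          rw [max_eq_left (le_of_lt ht.1), min_eq_right (le_of_lt hlt),
            max_eq_right (hvw t (le_of_lt ht.1))]
        have : β (t, ψ n t) = α (t, w t) := by rw [hβ]; simp only; rw [hqval]
        rw [this]
        linarith [hupper t (le_of_lt ht.1)]
      · rw [hψ0 n]
    have hlowerT : ∀ t ∈ Icc (0:ℝ) n, v t ≤ ψ n t := by
      apply stay_below_aux (Nat.cast_nonneg n)
        (hvc.mono Icc_subset_Ici_self) (hψc n)
      · intro t ht hlt
        have ht' : t ∈ Icc (0:ℝ) n := ⟨le_of_lt ht.1, le_of_lt ht.2⟩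
        have hdf : HasDerivAt (ψ n) (β (t, ψ n t)) t :=
          (hψd n t ht').hasDerivAt (Icc_mem_nhds ht.1 ht.2)
        have hdv : HasDerivAt v (v' t) t :=
          (hv t (le_of_lt ht.1)).hasDerivAt (Ici_mem_nhds ht.1)
        refine ⟨v' t - β (t, ψ n t), ?_, hdv.sub hdf⟩
        have hqval : q (t, ψ n t) = (t, v t) := by
          simp only [hq, hm]
          rw [max_eq_left (le_of_lt ht.1),
            min_eq_left (le_trans (le_of_lt hlt) (hvw t (le_of_lt ht.1))),
            max_eq_left (le_of_lt hlt)]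
        have : β (t, ψ n t) = α (t, v t) := by rw [hβ]; simp only; rw [hqval]
        rw [this]
        linarith [hlower t (le_of_lt ht.1)]
      · rw [hψ0 n]; exact hvw _ (mem_Ici.mpr (Nat.cast_nonneg n))
    exact fun t ht => ⟨hlowerT t ht, hupperT t ht⟩
  -- comparison between solutions
  have hcomp : ∀ k n : ℕ, k ≤ n → ∀ t ∈ Icc (0:ℝ) k, ψ n t ≤ ψ k t := by
    intro k n hkn
    obtain ⟨C, L, hC0, hL0, hCb, hLip⟩ := key k (Nat.cast_nonneg k)
    have hkn' : (k:ℝ) ≤ n := Nat.cast_le.2 hkn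
    apply no_cross_aux (Nat.cast_nonneg k) (fun t ht => hLip t ht.2)
    · intro t ht
      exact (hψd n t ⟨ht.1, le_trans ht.2 hkn'⟩).mono (Icc_subset_Icc le_rfl hkn')
    · exact fun t ht => hψd k t ht
    · rw [hψ0 k]
      exact (htrap n k ⟨Nat.cast_nonneg k, hkn'⟩).2
  -- pointwise limit
  have hconv : ∀ x : ℝ, 0 ≤ x → ∃ l : ℝ, Tendsto (fun n : ℕ => ψ n x) atTop (𝓝 l) := by
    intro x hx
    set N := ⌈x⌉₊ with hN
    have hxN : x ≤ N := Nat.le_ceil x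
    have hanti : Antitone fun k : ℕ => ψ (k + N) x := by
      intro i j hij
      refine hcomp (i + N) (j + N) (by omega) x ⟨hx, le_trans hxN ?_⟩
      exact_mod_cast Nat.le_add_left N i
    have hbdd : BddBelow (range fun k : ℕ => ψ (k + N) x) := by
      refine ⟨v x, ?_⟩
      rintro y ⟨k, rfl⟩
      refine (htrap (k + N) x ⟨hx, le_trans hxN ?_⟩).1
      exact_mod_cast Nat.le_add_left N k
    have h1 := tendsto_atTop_ciInf hanti hbdd
    exact ⟨_, (tendsto_add_atTop_iff_nat N).1 h1⟩
  have hconv' : ∀ x : ℝ, ∃ l : ℝ, 0 ≤ x → Tendsto (fun n : ℕ => ψ n x) atTop (𝓝 l) := by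
    intro x
    by_cases hx : 0 ≤ x
    · obtain ⟨l, hl⟩ := hconv x hx; exact ⟨l, fun _ => hl⟩
    · exact ⟨0, fun h => absurd h hx⟩
  choose g hg using hconv'
  have hmemN : ∀ x : ℝ, 0 ≤ x → ∀ n : ℕ, ⌈x⌉₊ ≤ n → x ∈ Icc (0:ℝ) n := by
    intro x hx n hn
    exact ⟨hx, le_trans (Nat.le_ceil x) (Nat.cast_le.2 hn)⟩
  -- bounds for g
  have hgb : ∀ x : ℝ, 0 ≤ x → v x ≤ g x ∧ g x ≤ w x := by
    intro x hx
    constructor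
    · refine ge_of_tendsto (hg x hx) ?_
      filter_upwards [eventually_ge_atTop ⌈x⌉₊] with n hn
      exact (htrap n x (hmemN x hx n hn)).1
    · refine le_of_tendsto (hg x hx) ?_
      filter_upwards [eventually_ge_atTop ⌈x⌉₊] with n hn
      exact (htrap n x (hmemN x hx n hn)).2
  -- continuity of g on Ici 0
  have hgl : ∀ b : ℝ, 0 ≤ b → ∃ C : ℝ, 0 ≤ C ∧
      ∀ x ∈ Icc (0:ℝ) b, ∀ y ∈ Icc (0:ℝ) b, |g x - g y| ≤ C * |x - y| := by
    intro b hb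
    obtain ⟨C, L, hC0, hL0, hCb, hLip⟩ := key b hb
    refine ⟨C, hC0, ?_⟩
    intro x hx y hy
    have hev : ∀ᶠ n : ℕ in atTop, |ψ n x - ψ n y| ≤ C * |x - y| := by
      filter_upwards [eventually_ge_atTop ⌈b⌉₊] with n hn
      have hbn : b ≤ (n:ℝ) := le_trans (Nat.le_ceil b) (Nat.cast_le.2 hn)
      have hsub : Icc (0:ℝ) b ⊆ Icc (0:ℝ) n := Icc_subset_Icc le_rfl hbn
      have := Convex.norm_image_sub_le_of_norm_hasDerivWithin_le
        (f := ψ n) (f' := fun t => β (t, ψ n t)) (s := Icc (0:ℝ) b)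
        (fun t ht => (hψd n t (hsub ht)).mono hsub)
        (fun t ht => by rw [Real.norm_eq_abs]; exact hCb (t, ψ n t) ht.2)
        (convex_Icc _ _) hy hx
      rw [Real.norm_eq_abs, Real.norm_eq_abs] at this
      exact this
    have hten : Tendsto (fun n : ℕ => |ψ n x - ψ n y|) atTop (𝓝 |g x - g y|) :=
      ((hg x hx.1).sub (hg y hy.1)).abs
    exact le_of_tendsto hten hev
  have hgc : ContinuousOn g (Ici 0) := by
    intro x hx
    have hx' : (0:ℝ) ≤ x := hx
    obtain ⟨C, hC0, hCl⟩ := hgl (x + 1) (by linarith)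
    have hlip : LipschitzOnWith (Real.toNNReal C) g (Icc 0 (x + 1)) := by
      apply LipschitzOnWith.of_dist_le_mul
      intro a ha b hb
      rw [Real.dist_eq, Real.dist_eq, Real.coe_toNNReal _ hC0]
      exact hCl a ha b hb
    have h1 : ContinuousWithinAt g (Icc 0 (x + 1)) x :=
      hlip.continuousOn x ⟨hx, by linarith⟩
    apply h1.mono_of_mem_nhdsWithin
    rw [mem_nhdsWithin]
    refine ⟨Iio (x + 1), isOpen_Iio, by simp, ?_⟩
    rintro y ⟨hy1, hy2⟩
    exact ⟨hy2, le_of_lt hy1⟩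
  -- integral identity for each solution
  have hint : ∀ n : ℕ, ∀ x : ℝ, 0 ≤ x → x ≤ n →
      ∫ t in (0:ℝ)..x, β (t, ψ n t) = ψ n x - ψ n 0 := by
    intro n x hx hxn
    have hsub : Icc (0:ℝ) x ⊆ Icc (0:ℝ) n := Icc_subset_Icc le_rfl hxn
    apply intervalIntegral.integral_eq_sub_of_hasDeriv_right_of_le hx
      ((hψc n).mono hsub)
    · intro t ht
      apply (hψd n t (hsub ⟨le_of_lt ht.1, le_of_lt ht.2⟩)).mono_of_mem_nhdsWithin
      rw [mem_nhdsWithin]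
      refine ⟨Ioo 0 n, isOpen_Ioo, ⟨ht.1, lt_of_lt_of_le ht.2 hxn⟩, ?_⟩
      rintro y ⟨hy1, _⟩
      exact ⟨le_of_lt hy1.1, le_of_lt hy1.2⟩
    · apply ContinuousOn.intervalIntegrable_of_Icc hx
      exact hβc.comp_continuousOn (continuousOn_id.prodMk ((hψc n).mono hsub))
  -- integral equation for the limit
  have hgeq : ∀ x : ℝ, 0 ≤ x → g x = g 0 + ∫ t in (0:ℝ)..x, β (t, g t) := by
    intro x hx
    obtain ⟨C, L, hC0, hL0, hCb, hLip⟩ := key x hx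
    have h1 : Tendsto (fun n : ℕ => ψ n x) atTop (𝓝 (g x)) := hg x hx
    have h2 : Tendsto (fun n : ℕ => ψ n 0 + ∫ t in (0:ℝ)..x, β (t, ψ n t)) atTop
        (𝓝 (g 0 + ∫ t in (0:ℝ)..x, β (t, g t))) := by
      refine Tendsto.add (hg 0 le_rfl) ?_
      apply intervalIntegral.tendsto_integral_filter_of_dominated_convergence (fun _ => C)
      · filter_upwards [eventually_ge_atTop ⌈x⌉₊] with n hn
        have hxn : x ≤ (n:ℝ) := le_trans (Nat.le_ceil x) (Nat.cast_le.2 hn)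
        apply ContinuousOn.aestronglyMeasurable _ measurableSet_uIoc
        rw [uIoc_of_le hx]
        apply (hβc.comp_continuousOn (continuousOn_id.prodMk
          ((hψc n).mono (Icc_subset_Icc le_rfl hxn)))).mono
        exact Ioc_subset_Icc_self
      · filter_upwards with n
        apply Filter.Eventually.of_forall
        intro t ht
        rw [uIoc_of_le hx] at ht
        rw [Real.norm_eq_abs]
        exact hCb (t, ψ n t) ht.2
      · exact intervalIntegrable_const
      · apply Filter.Eventually.of_forall
        intro t ht
        rw [uIoc_of_le hx] at ht
        have hten : Tendsto (fun n : ℕ => ((t, ψ n t) : ℝ × ℝ)) atTop (𝓝 (t, g t)) :=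
          tendsto_const_nhds.prodMk_nhds (hg t (le_of_lt ht.1))
        exact (hβc.tendsto (t, g t)).comp hten
    have h3 : ∀ᶠ n : ℕ in atTop,
        ψ n 0 + ∫ t in (0:ℝ)..x, β (t, ψ n t) = ψ n x := by
      filter_upwards [eventually_ge_atTop ⌈x⌉₊] with n hn
      have hxn : x ≤ (n:ℝ) := le_trans (Nat.le_ceil x) (Nat.cast_le.2 hn)
      have := hint n x hx hxn
      linarith
    exact tendsto_nhds_unique h1 (Tendsto.congr' h3 h2)
  -- define φ
  set G : ℝ → ℝ := fun t => β (t, g (m t)) with hG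
  have hGc : Continuous G :=
    hβc.comp (continuous_id.prodMk (hgc.comp_continuous hmc hm0))
  set φ : ℝ → ℝ := fun x => g 0 + ∫ t in (0:ℝ)..x, G t with hφ
  have hφg : ∀ x : ℝ, 0 ≤ x → φ x = g x := by
    intro x hx
    rw [hφ]
    simp only
    rw [hgeq x hx]
    congr 1
    apply intervalIntegral.integral_congr
    intro t ht
    rw [uIcc_of_le hx] at ht
    simp only [hG]
    rw [show m t = t from max_eq_left ht.1]
  have hφd : ∀ x : ℝ, HasDerivAt φ (G x) x := by
    intro x
    have hInt : IntervalIntegrable G MeasureTheory.volume 0 x :=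
      hGc.intervalIntegrable _ _
    have h1 := intervalIntegral.integral_hasDerivAt_right hInt
      (hGc.stronglyMeasurableAtFilter _ _)
      hGc.continuousAt
    exact h1.const_add (g 0)
  refine ⟨φ, fun x hx => ?_, fun x hx => ?_⟩
  · rw [hφg x hx]
    exact hgb x hx
  · have hd := (hφd x).hasDerivWithinAt (s := Ici 0)
    have hΓmem : (x, g x) ∈ Γ := by
      rw [hΓ]; exact ⟨hx, (hgb x hx).1, (hgb x hx).2⟩
    have hGx : G x = α (x, φ x) := by
      simp only [hG]
      rw [show m x = x from max_eq_left hx, hβeq (x, g x) hΓmem, hφg x hx]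
    rwa [hGx] at hd
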